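/- Let s, s' be unit vectors in ℂ^N with γ := ⟨s,s'⟩ real, 0 < γ < 1, δ := √(1−γ²), ρ_± := √((1±δ)/2), u_± := ±(ρ_± s' − ρ_∓ s)/δ, and Δ := |s'⟩⟨s'| − |s⟩⟨s|. Then Δ u_+ = δ u_+ and Δ u_− = −δ u_−. -/

import Mathlib

theorem stmt_9 {N : ℕ} (s s' : EuclideanSpace ℂ (Fin N))
    (hs : ‖s‖ = 1) (hs' : ‖s'‖ = 1) (γ : ℝ)
    (hγ : (inner ℂ s s' : ℂ) = (γ : ℂ)) (h0 : 0 < γ) (h1 : γ < 1)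
    (δ ρp ρm : ℝ) (hδ : δ = Real.sqrt (1 - γ ^ 2))
    (hρp : ρp = Real.sqrt ((1 + δ) / 2)) (hρm : ρm = Real.sqrt ((1 - δ) / 2))
    (up um : EuclideanSpace ℂ (Fin N))
    (hup : up = δ⁻¹ • (ρp • s' - ρm • s))
    (hum : um = -(δ⁻¹ • (ρm • s' - ρp • s))) :
    (inner ℂ s' up : ℂ) • s' - (inner ℂ s up : ℂ) • s = δ • up ∧
    (inner ℂ s' um : ℂ) • s' - (inner ℂ s um : ℂ) • s = (-δ) • um := by
  have hγ2 : (0:ℝ) < 1 - γ ^ 2 := by nlinarith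
  have hδpos : 0 < δ := by rw [hδ]; exact Real.sqrt_pos.mpr hγ2
  have hδ2 : δ ^ 2 = 1 - γ ^ 2 := by rw [hδ]; exact Real.sq_sqrt hγ2.le
  have hδlt : δ < 1 := by nlinarith
  have hppos : 0 < ρp := by rw [hρp]; positivity
  have hmpos : 0 < ρm := by rw [hρm]; exact Real.sqrt_pos.mpr (by linarith)
  have hp2 : ρp ^ 2 = (1 + δ) / 2 := by rw [hρp]; exact Real.sq_sqrt (by linarith)
  have hm2 : ρm ^ 2 = (1 - δ) / 2 := by rw [hρm]; exact Real.sq_sqrt (by linarith)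
  have hpm : ρp * ρm = γ / 2 := by
    rw [hρp, hρm, ← Real.sqrt_mul (by linarith)]
    have h : (1 + δ) / 2 * ((1 - δ) / 2) = (γ / 2) ^ 2 := by nlinarith
    rw [h, Real.sqrt_sq (by positivity)]
  have hA : ρp - ρm * γ = δ * ρp := by
    have h : ρm * (ρp - ρm * γ) = ρm * (δ * ρp) := by
      linear_combination (1 - δ) * hpm - γ * hm2
    exact mul_left_cancel₀ hmpos.ne' h
  have hB : ρp * γ - ρm = δ * ρm := by
    have h : ρp * (ρp * γ - ρm) = ρp * (δ * ρm) := by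
      linear_combination γ * hp2 - (1 + δ) * hpm
    exact mul_left_cancel₀ hppos.ne' h
  have hAc : (ρp : ℂ) - ρm * γ = δ * ρp := by exact_mod_cast hA
  have hBc : (ρp : ℂ) * γ - ρm = δ * ρm := by exact_mod_cast hB
  have hδc : (δ : ℂ) ≠ 0 := by exact_mod_cast hδpos.ne'
  have hs's : (inner ℂ s' s : ℂ) = γ := by rw [← inner_conj_symm, hγ]; simp
  have hs's' : (inner ℂ s' s' : ℂ) = 1 := by
    rw [inner_self_eq_norm_sq_to_K, hs']; norm_num
  have hss : (inner ℂ s s : ℂ) = 1 := by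
    rw [inner_self_eq_norm_sq_to_K, hs]; norm_num
  subst hup hum
  constructor <;>
  · simp only [← Complex.coe_smul, inner_smul_right, inner_sub_right, inner_neg_right,
      hγ, hs's, hs's', hss]
    push_cast
    match_scalars <;> field_simp <;>
      (first
        | linear_combination hAc
        | linear_combination -hBc
        | linear_combination hBc
        | linear_combination -hAc)
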